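/- Correctness of the parametric monitoring algorithm B(M): for any monitor M = (S, E, C, i, σ, γ) and any parametric trace τ, (1) the domain of B(M)(τ).Δ equals B(M)(τ).Θ, which equals Θ_τ; (2) B(M)(τ).Δ(θ) = σ(i, τ↾θ) and B(M)(τ).Γ(θ) = γ(σ(i, τ↾θ)) for every θ ∈ B(M)(τ).Θ; and (3) for every parameter instance θ : X ⇀ V, σ(i, τ↾θ) = B(M)(τ).Δ(max (θ]_{B(M)(τ).Θ}) and γ(σ(i, τ↾θ)) = B(M)(τ).Γ(max (θ]_{B(M)(τ).Θ}). -/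

import Mathlib

/- Partial functions X ⇀ V are modeled as functions `X → Option V`. -/

variable {X V E : Type*}

/-- `θ` is less informative than `θ'` (θ ⊑ θ'): wherever `θ` is defined, `θ'` is
defined with the same value. -/
def PFle (θ θ' : X → Option V) : Prop :=
  ∀ x v, θ x = some v → θ' x = some v

/-- The everywhere-undefined partial function ⊥. -/
def pbot : X → Option V := fun _ => none

/-- `θ'` is an upper bound of the set `Θ` of partial functions. -/
def IsUB (Θ : Set (X → Option V)) (θ' : X → Option V) : Prop :=
  ∀ θ ∈ Θ, PFle θ θ'

/-- `θ'` is the least upper bound (⊔Θ) of the set `Θ` of partial functions. -/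
def IsLubPF (Θ : Set (X → Option V)) (θ' : X → Option V) : Prop :=
  IsUB Θ θ' ∧ ∀ θ'', IsUB Θ θ'' → PFle θ' θ''

/-- Θ is lub closed: every subset of Θ admitting an upper bound has its lub in Θ. -/
def LubClosed (Θ : Set (X → Option V)) : Prop :=
  ∀ Θ' ⊆ Θ, ∀ u, IsLubPF Θ' u → u ∈ Θ

/-- The lub closure of Θ: the intersection of all lub closed sets including Θ. -/
def lubClosure (Θ : Set (X → Option V)) : Set (X → Option V) :=
  ⋂₀ {Θ' | Θ ⊆ Θ' ∧ LubClosed Θ'}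

/-- (θ]_Θ : the elements of Θ that are less informative than θ. -/
def below (θ : X → Option V) (Θ : Set (X → Option V)) : Set (X → Option V) :=
  {θ'' ∈ Θ | PFle θ'' θ}

/-- {θ} ⊔ Θ : the set of all existing lubs θ ⊔ θ'' with θ'' ∈ Θ. -/
def joinOne (θ : X → Option V) (Θ : Set (X → Option V)) : Set (X → Option V) :=
  {θ' | ∃ θ'' ∈ Θ, IsLubPF {θ, θ''} θ'}

/-- max (θ]_Θ : the maximum element of (θ]_Θ (well defined when Θ is lub closed). -/
noncomputable def maxBelow (Θ : Set (X → Option V)) (θ : X → Option V) :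
    X → Option V :=
  Classical.epsilon fun m => m ∈ below θ Θ ∧ ∀ q ∈ below θ Θ, PFle q m

/-- A parametric event is a pair e⟨θ⟩; a parametric trace is a finite list of
parametric events. Θ_τ is the lub closure of the parameter instances occurring in τ. -/
def ThetaOf (τ : List (E × (X → Option V))) : Set (X → Option V) :=
  lubClosure {θ | ∃ e : E, (e, θ) ∈ τ}

/-- The θ-trace traceSlice τ↾θ : keep (in order) the base events of τ whose parameter
instance is ⊑ θ, dropping the parameter instances. -/
noncomputable def traceSlice (τ : List (E × (X → Option V))) (θ : X → Option V) :
    List E :=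
  (τ.filter fun p => @decide (PFle p.2 θ) (Classical.propDecidable _)).map Prod.fst

/-- The transition function of a monitor extended to traces:
σ(s, ε) = s and σ(s, w e) = σ(σ(s, w), e). -/
def runMon {S : Type*} (σ : S → E → S) (s : S) (w : List E) : S :=
  w.foldl σ s

/-- The state of algorithm B⟨X⟩(M): the partial map Δ from parameter instances to
monitor states and the set Θ of parameter instances.  (The partial map Γ from
parameter instances to output categories is Δ composed with γ.) -/
structure BState (X V S : Type*) where
  Δ : (X → Option V) → Option S
  Th : Set (X → Option V)

/- One step of algorithm B⟨X⟩(M), processing the parametric event ev = e⟨θ⟩: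
for each θ' ∈ {θ} ⊔ Θ, set Δ(θ') to σ(Δ(max (θ']_Θ)), e);
then Θ becomes {⊥, θ} ⊔ Θ = Θ ∪ ({θ} ⊔ Θ). -/
open Classical in
noncomputable def Bstep {S : Type*} (σ : S → E → S)
    (s : BState X V S) (ev : E × (X → Option V)) : BState X V S where
  Δ := fun θ' =>
    if θ' ∈ joinOne ev.2 s.Th then (s.Δ (maxBelow s.Th θ')).map (fun st => σ st ev.1)
    else s.Δ θ'
  Th := s.Th ∪ joinOne ev.2 s.Th

/- The initial state of algorithm B⟨X⟩(M): Δ defined only on ⊥, with value the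
initial state i, and Θ = {⊥}. -/
open Classical in
noncomputable def Binit {S : Type*} (i : S) : BState X V S where
  Δ := fun θ' => if θ' = pbot then some i else none
  Th := {pbot}

/-- Algorithm B⟨X⟩(M) run on a parametric trace, processing events first to last. -/
noncomputable def Brun {S : Type*} (i : S) (σ : S → E → S)
    (τ : List (E × (X → Option V))) : BState X V S :=
  τ.foldl (Bstep σ) (Binit i)

/-- The table Γ of algorithm B⟨X⟩(M): Γ(θ') = γ(Δ(θ')) for θ' in the domain of Δ. -/
noncomputable def BGamma {S C : Type*} (γ : S → C) (s : BState X V S) :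
    (X → Option V) → Option C :=
  fun θ' => (s.Δ θ').map γ

section Aux

lemma pfle_refl (θ : X → Option V) : PFle θ θ := fun _ _ h => h

lemma pfle_trans {a b c : X → Option V} (h1 : PFle a b) (h2 : PFle b c) : PFle a c :=
  fun x v h => h2 x v (h1 x v h)

lemma pfle_pbot (θ : X → Option V) : PFle pbot θ := by
  intro x v h; simp [pbot] at h

lemma exists_lub_of_ub {Θ : Set (X → Option V)} {u : X → Option V} (hu : IsUB Θ u) :
    ∃ v, IsLubPF Θ v := by
  classical
  refine ⟨fun x => if ∃ θ ∈ Θ, ∃ a, θ x = some a then u x else none, ?_, ?_⟩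
  · intro θ hθ x v hx
    have hcond : ∃ θ' ∈ Θ, ∃ a, θ' x = some a := ⟨θ, hθ, v, hx⟩
    simp only [if_pos hcond]
    exact hu θ hθ x v hx
  · intro w hw x v hx
    by_cases hcond : ∃ θ' ∈ Θ, ∃ a, θ' x = some a
    · simp only [if_pos hcond] at hx
      obtain ⟨θ', hθ', a, ha⟩ := hcond
      have h1 : u x = some a := hu θ' hθ' x a ha
      rw [h1] at hx
      obtain rfl : a = v := by injection hx
      exact hw θ' hθ' x _ ha
    · simp only [if_neg hcond] at hx
      cases hx

lemma mem_below_iff {θ θ'' : X → Option V} {Θ : Set (X → Option V)} :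
    θ'' ∈ below θ Θ ↔ θ'' ∈ Θ ∧ PFle θ'' θ := Iff.rfl

lemma maxBelow_spec {Θ : Set (X → Option V)} (hc : LubClosed Θ)
    (θ : X → Option V) :
    maxBelow Θ θ ∈ below θ Θ ∧ ∀ q ∈ below θ Θ, PFle q (maxBelow Θ θ) := by
  have hub : IsUB (below θ Θ) θ := fun q hq => hq.2
  obtain ⟨v, hv⟩ := exists_lub_of_ub hub
  have hvθ : PFle v θ := hv.2 θ hub
  have hvΘ : v ∈ Θ := hc _ (fun q hq => hq.1) v hv
  exact Classical.epsilon_spec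
    (p := fun m => m ∈ below θ Θ ∧ ∀ q ∈ below θ Θ, PFle q m)
    ⟨v, ⟨hvΘ, hvθ⟩, fun q hq => hv.1 q hq⟩

lemma subset_lubClosure (B : Set (X → Option V)) : B ⊆ lubClosure B :=
  fun θ hθ => Set.mem_sInter.2 fun _ hΘ' => hΘ'.1 hθ

lemma lubClosed_lubClosure (B : Set (X → Option V)) : LubClosed (lubClosure B) := by
  intro Θ' hsub u hu
  refine Set.mem_sInter.2 fun T hT => ?_
  exact hT.2 Θ' (fun a ha => Set.mem_sInter.1 (hsub ha) T hT) u hu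

lemma lubClosure_min {B T : Set (X → Option V)} (h1 : B ⊆ T) (h2 : LubClosed T) :
    lubClosure B ⊆ T :=
  fun _ ha => Set.mem_sInter.1 ha T ⟨h1, h2⟩

lemma isLubPF_empty : IsLubPF (∅ : Set (X → Option V)) pbot :=
  ⟨fun θ h => absurd h (Set.notMem_empty θ), fun w _ => pfle_pbot w⟩

lemma pbot_mem_lubClosure (B : Set (X → Option V)) : pbot ∈ lubClosure B :=
  lubClosed_lubClosure B ∅ (Set.empty_subset _) pbot isLubPF_empty

lemma pfle_of_mem_joinOne {θ θ' : X → Option V} {Θ : Set (X → Option V)}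
    (h : θ' ∈ joinOne θ Θ) : PFle θ θ' := by
  obtain ⟨b, _, hl⟩ := h
  exact hl.1 θ (Set.mem_insert _ _)

lemma mem_joinOne_self_of_le {θ θ' : X → Option V} {Θ : Set (X → Option V)}
    (hθ' : θ' ∈ Θ) (h : PFle θ θ') : θ' ∈ joinOne θ Θ := by
  refine ⟨θ', hθ', ?_, fun w hw => hw θ' (by simp)⟩
  intro a ha
  rcases Set.mem_insert_iff.1 ha with rfl | ha
  · exact h
  · rw [Set.mem_singleton_iff] at ha; subst ha; exact pfle_refl _

lemma mem_joinOne_of_pbot {θ : X → Option V} {Θ : Set (X → Option V)}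
    (hb : pbot ∈ Θ) : θ ∈ joinOne θ Θ := by
  refine ⟨pbot, hb, ?_, fun w hw => hw θ (Set.mem_insert _ _)⟩
  intro a ha
  rcases Set.mem_insert_iff.1 ha with rfl | ha
  · exact pfle_refl _
  · rw [Set.mem_singleton_iff] at ha; subst ha; exact pfle_pbot _

lemma lubClosed_union_joinOne {Θ : Set (X → Option V)} (hc : LubClosed Θ)
    (θ : X → Option V) : LubClosed (Θ ∪ joinOne θ Θ) := by
  intro Ss hS u hu
  by_cases hSΘ : Ss ⊆ Θ
  · exact Or.inl (hc Ss hSΘ u hu)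
  · right
    obtain ⟨a, haS, haΘ⟩ := Set.not_subset.1 hSΘ
    have haj : a ∈ joinOne θ Θ := (hS haS).resolve_left haΘ
    have hθu : PFle θ u := pfle_trans (pfle_of_mem_joinOne haj) (hu.1 a haS)
    set T : Set (X → Option V) := {b | b ∈ Θ ∧ PFle b u} with hT
    have hTub : IsUB T u := fun b hb => hb.2
    obtain ⟨v, hv⟩ := exists_lub_of_ub hTub
    have hvΘ : v ∈ Θ := hc T (fun b hb => hb.1) v hv
    have hvu : PFle v u := hv.2 u hTub
    refine ⟨v, hvΘ, ?_, ?_⟩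
    · intro c hc'
      rcases Set.mem_insert_iff.1 hc' with rfl | hc'
      · exact hθu
      · rw [Set.mem_singleton_iff] at hc'; subst hc'; exact hvu
    · intro c hcub
      have hcθ : PFle θ c := hcub θ (Set.mem_insert _ _)
      have hcv : PFle v c := hcub v (by simp)
      refine hu.2 c ?_
      intro a' ha'
      rcases hS ha' with h1 | h2
      · exact pfle_trans (hv.1 a' ⟨h1, hu.1 a' ha'⟩) hcv
      · obtain ⟨b, hbΘ, hb⟩ := h2
        have hba' : PFle b a' := hb.1 b (by simp)
        have hbT : b ∈ T := ⟨hbΘ, pfle_trans hba' (hu.1 a' ha')⟩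
        refine hb.2 c ?_
        intro d hd
        rcases Set.mem_insert_iff.1 hd with rfl | hd
        · exact hcθ
        · rw [Set.mem_singleton_iff] at hd; subst hd
          exact pfle_trans (hv.1 _ hbT) hcv

lemma thetaOf_append (τ : List (E × (X → Option V))) (ev : E × (X → Option V)) :
    ThetaOf (τ ++ [ev]) = ThetaOf τ ∪ joinOne ev.2 (ThetaOf τ) := by
  have hbase : {θ : X → Option V | ∃ e : E, (e, θ) ∈ τ ++ [ev]} =
      {θ : X → Option V | ∃ e : E, (e, θ) ∈ τ} ∪ {ev.2} := by
    ext θ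
    simp only [Set.mem_setOf_eq, List.mem_append, List.mem_singleton,
      Set.mem_union, Set.mem_singleton_iff]
    constructor
    · rintro ⟨e, he | he⟩
      · exact Or.inl ⟨e, he⟩
      · right
        have := congrArg Prod.snd he
        simpa using this
    · rintro (⟨e, he⟩ | rfl)
      · exact ⟨e, Or.inl he⟩
      · exact ⟨ev.1, Or.inr rfl⟩
  have hc : LubClosed (ThetaOf τ) := lubClosed_lubClosure _
  have hbot : pbot ∈ ThetaOf τ := pbot_mem_lubClosure _
  apply Set.Subset.antisymm
  · unfold ThetaOf
    rw [hbase]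
    apply lubClosure_min
    · apply Set.union_subset
      · exact fun a ha => Or.inl (subset_lubClosure _ ha)
      · intro a ha
        rw [Set.mem_singleton_iff] at ha; subst ha
        exact Or.inr (mem_joinOne_of_pbot hbot)
    · exact lubClosed_union_joinOne hc ev.2
  · have hsub : ThetaOf τ ⊆ ThetaOf (τ ++ [ev]) := by
      apply lubClosure_min _ (lubClosed_lubClosure _)
      intro a ha
      apply subset_lubClosure
      obtain ⟨e, he⟩ := ha
      exact ⟨e, List.mem_append.2 (Or.inl he)⟩
    apply Set.union_subset hsub
    intro a ha
    obtain ⟨b, hbΘ, hb⟩ := ha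
    have hθmem : ev.2 ∈ ThetaOf (τ ++ [ev]) := by
      apply subset_lubClosure
      exact ⟨ev.1, List.mem_append.2 (Or.inr (by simp))⟩
    refine lubClosed_lubClosure _ {ev.2, b} ?_ a hb
    intro d hd
    rcases Set.mem_insert_iff.1 hd with rfl | hd
    · exact hθmem
    · rw [Set.mem_singleton_iff] at hd; subst hd; exact hsub hbΘ

open Classical in
lemma traceSlice_append (τ : List (E × (X → Option V))) (ev : E × (X → Option V))
    (θ : X → Option V) :
    traceSlice (τ ++ [ev]) θ =
      traceSlice τ θ ++ if PFle ev.2 θ then [ev.1] else [] := by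
  classical
  unfold traceSlice
  rw [List.filter_append, List.map_append]
  congr 1
  by_cases h : PFle ev.2 θ
  · simp [List.filter, h]
  · simp [List.filter, h]

lemma traceSlice_congr {τ : List (E × (X → Option V))} {θ m : X → Option V}
    (h : ∀ p ∈ τ, (PFle p.2 θ ↔ PFle p.2 m)) :
    traceSlice τ θ = traceSlice τ m := by
  unfold traceSlice
  congr 1
  apply List.filter_congr
  intro p hp
  exact decide_eq_decide.2 (h p hp)

lemma runMon_append {S : Type*} (σ : S → E → S) (s : S) (w : List E) (e : E) :
    runMon σ s (w ++ [e]) = σ (runMon σ s w) e := by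
  simp [runMon]

lemma delta_maxBelow {S : Type*} {σ : S → E → S} {i : S}
    (τ : List (E × (X → Option V))) (s : BState X V S)
    (hc : LubClosed s.Th)
    (hbase : ∀ p ∈ τ, p.2 ∈ s.Th)
    (hΔ : ∀ θ' ∈ s.Th, s.Δ θ' = some (runMon σ i (traceSlice τ θ')))
    (θ : X → Option V) :
    s.Δ (maxBelow s.Th θ) = some (runMon σ i (traceSlice τ θ)) := by
  obtain ⟨hmem, hmax⟩ := maxBelow_spec hc θ
  have hslice : traceSlice τ θ = traceSlice τ (maxBelow s.Th θ) := by
    apply traceSlice_congr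
    intro p hp
    constructor
    · intro hle
      exact hmax p.2 ⟨hbase p hp, hle⟩
    · intro hle
      exact pfle_trans hle hmem.2
  rw [hΔ _ hmem.1, hslice]

lemma brun_inv {S : Type*} (i : S) (σ : S → E → S) (τ : List (E × (X → Option V))) :
    (Brun i σ τ).Th = ThetaOf τ ∧
    (∀ θ' ∈ (Brun i σ τ).Th,
      (Brun i σ τ).Δ θ' = some (runMon σ i (traceSlice τ θ'))) ∧
    (∀ θ', θ' ∉ (Brun i σ τ).Th → (Brun i σ τ).Δ θ' = none) := by
  induction τ using List.reverseRecOn with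
  | nil =>
    have hTh : ThetaOf ([] : List (E × (X → Option V))) = {pbot} := by
      apply Set.Subset.antisymm
      · apply lubClosure_min
        · intro a ha
          obtain ⟨e, he⟩ := ha
          simp at he
        · intro Θ' hsub u hu
          have hub : PFle u pbot := hu.2 pbot fun q hq => by
            have := hsub hq
            rw [Set.mem_singleton_iff] at this; subst this
            exact pfle_refl _
          have : u = pbot := by
            funext x
            cases hx : u x with
            | none => simp [pbot]
            | some v => exact (hub x v hx).symm
          rw [Set.mem_singleton_iff]
          exact this
      · intro a ha
        rw [Set.mem_singleton_iff] at ha; subst ha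
        exact pbot_mem_lubClosure _
    refine ⟨?_, ?_, ?_⟩
    · simpa [Brun, Binit] using hTh.symm
    · intro θ' hθ'
      simp only [Brun, List.foldl_nil, Binit] at hθ' ⊢
      rw [Set.mem_singleton_iff] at hθ'
      subst hθ'
      simp [traceSlice, runMon]
    · intro θ' hθ'
      simp only [Brun, List.foldl_nil, Binit] at hθ' ⊢
      rw [Set.mem_singleton_iff] at hθ'
      rw [if_neg hθ']
  | append_singleton τ ev ih =>
    classical
    obtain ⟨hTh, hΔ, hnone⟩ := ih
    have hrun : Brun i σ (τ ++ [ev]) = Bstep σ (Brun i σ τ) ev := by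
      simp [Brun]
    set s := Brun i σ τ with hs
    have hc : LubClosed s.Th := by rw [hTh]; exact lubClosed_lubClosure _
    have hbot : pbot ∈ s.Th := by rw [hTh]; exact pbot_mem_lubClosure _
    have hbase : ∀ p ∈ τ, p.2 ∈ s.Th := by
      intro p hp
      rw [hTh]
      exact subset_lubClosure _ ⟨p.1, hp⟩
    have hThnew : (Bstep σ s ev).Th = ThetaOf (τ ++ [ev]) := by
      rw [thetaOf_append, ← hTh]
      rfl
    refine ⟨by rw [hrun, hThnew], ?_, ?_⟩
    · intro θ' hθ'
      rw [hrun] at hθ' ⊢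
      have hθ'' : θ' ∈ s.Th ∪ joinOne ev.2 s.Th := hθ'
      by_cases hj : θ' ∈ joinOne ev.2 s.Th
      · have hle : PFle ev.2 θ' := pfle_of_mem_joinOne hj
        have hkey := delta_maxBelow (σ := σ) (i := i) τ s hc hbase hΔ θ'
        show (if θ' ∈ joinOne ev.2 s.Th then
            (s.Δ (maxBelow s.Th θ')).map (fun st => σ st ev.1) else s.Δ θ') = _
        rw [if_pos hj, hkey, traceSlice_append, if_pos hle, runMon_append]
        rfl
      · have hmem : θ' ∈ s.Th := hθ''.resolve_right hj
        have hnle : ¬ PFle ev.2 θ' := fun hle => hj (mem_joinOne_self_of_le hmem hle)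
        show (if θ' ∈ joinOne ev.2 s.Th then
            (s.Δ (maxBelow s.Th θ')).map (fun st => σ st ev.1) else s.Δ θ') = _
        rw [if_neg hj, traceSlice_append, if_neg hnle, List.append_nil]
        exact hΔ θ' hmem
    · intro θ' hθ'
      rw [hrun] at hθ' ⊢
      have h1 : θ' ∉ s.Th := fun h => hθ' (Or.inl h)
      have h2 : θ' ∉ joinOne ev.2 s.Th := fun h => hθ' (Or.inr h)
      show (if θ' ∈ joinOne ev.2 s.Th then
          (s.Δ (maxBelow s.Th θ')).map (fun st => σ st ev.1) else s.Δ θ') = none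
      rw [if_neg h2]
      exact hnone θ' h1

end Aux

/-- Correctness of the parametric monitoring algorithm B⟨X⟩(M) (Theorem 2):
(1) Dom(B(M)(τ).Δ) = B(M)(τ).Θ = Θ_τ;
(2) B(M)(τ).Δ(θ) = σ(i, τ↾θ) and B(M)(τ).Γ(θ) = γ(σ(i, τ↾θ)) for θ ∈ B(M)(τ).Θ;
(3) σ(i, τ↾θ) = B(M)(τ).Δ(max (θ]_{B(M)(τ).Θ}) and
    γ(σ(i, τ↾θ)) = B(M)(τ).Γ(max (θ]_{B(M)(τ).Θ}) for every parameter instance θ. -/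
theorem stmt19 {S C : Type*} (i : S) (σ : S → E → S) (γ : S → C)
    (τ : List (E × (X → Option V))) :
    ({θ | (Brun i σ τ).Δ θ ≠ none} = (Brun i σ τ).Th ∧
      (Brun i σ τ).Th = ThetaOf τ) ∧
    (∀ θ ∈ (Brun i σ τ).Th,
      (Brun i σ τ).Δ θ = some (runMon σ i (traceSlice τ θ)) ∧
      BGamma γ (Brun i σ τ) θ = some (γ (runMon σ i (traceSlice τ θ)))) ∧
    (∀ θ : X → Option V,
      (Brun i σ τ).Δ (maxBelow (Brun i σ τ).Th θ) =
        some (runMon σ i (traceSlice τ θ)) ∧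
      BGamma γ (Brun i σ τ) (maxBelow (Brun i σ τ).Th θ) =
        some (γ (runMon σ i (traceSlice τ θ)))) := by
  obtain ⟨hTh, hΔ, hnone⟩ := brun_inv i σ τ
  have hc : LubClosed (Brun i σ τ).Th := by rw [hTh]; exact lubClosed_lubClosure _
  have hbase : ∀ p ∈ τ, p.2 ∈ (Brun i σ τ).Th := by
    intro p hp
    rw [hTh]
    exact subset_lubClosure _ ⟨p.1, hp⟩
  refine ⟨⟨?_, hTh⟩, ?_, ?_⟩
  · ext θ
    simp only [Set.mem_setOf_eq]
    constructor
    · intro h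
      by_contra hmem
      exact h (hnone θ hmem)
    · intro h
      rw [hΔ θ h]
      simp
  · intro θ hθ
    refine ⟨hΔ θ hθ, ?_⟩
    simp [BGamma, hΔ θ hθ]
  · intro θ
    have hkey := delta_maxBelow (σ := σ) (i := i) τ (Brun i σ τ) hc hbase hΔ θ
    exact ⟨hkey, by simp [BGamma, hkey]⟩
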